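/- Let G, e > 0, M > 0 and set t* = G / (e·(G + (4/M²)·e)). Then the function η(t) = t·G - (4/M²)·ω*(t·e) satisfies η(0) = 0 and η(t*) = (4/M²)·ω((M²/4)·G/e) > 0, where ω(s) = s - ln(1+s). Consequently η(t) > 0 for all t ∈ (0, t*]. -/

import Mathlib

theorem eta_positive (G e M : ℝ) (hG : 0 < G) (he : 0 < e) (hM : 0 < M) :
    let tstar := G / (e * (G + (4 / M ^ 2) * e))
    let η : ℝ → ℝ := fun t => t * G - (4 / M ^ 2) * (-(t * e) - Real.log (1 - t * e))
    η 0 = 0 ∧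
    η tstar = (4 / M ^ 2) * ((M ^ 2 / 4) * G / e - Real.log (1 + (M ^ 2 / 4) * G / e)) ∧
    0 < η tstar ∧
    ∀ t : ℝ, 0 < t → t ≤ tstar → 0 < η t := by
  intro tstar η
  have hM2 : (0:ℝ) < M ^ 2 := by positivity
  set c : ℝ := 4 / M ^ 2 with hc_def
  have hc : 0 < c := by positivity
  set D : ℝ := G + c * e with hD_def
  have hD : 0 < D := by positivity
  have htstar_def : tstar = G / (e * D) := rfl
  have htstar_pos : 0 < tstar := by rw [htstar_def]; positivity
  have hue : tstar * e = G / D := by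
    rw [htstar_def]; field_simp
  have h1u : 1 - tstar * e = c * e / D := by
    rw [hue]; field_simp; ring
  have h1u_pos : 0 < 1 - tstar * e := by rw [h1u]; positivity
  have hs : (M ^ 2 / 4) * G / e = G / (c * e) := by
    rw [hc_def]; field_simp
  have hs1 : 1 + (M ^ 2 / 4) * G / e = D / (c * e) := by
    rw [hs, hD_def]; field_simp; ring
  have hlin : tstar * G + c * (tstar * e) = G / e := by
    rw [hue, htstar_def]; field_simp; ring
  have hηt : η tstar = G / e + c * Real.log (c * e / D) := by
    show tstar * G - c * (-(tstar * e) - Real.log (1 - tstar * e))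
        = G / e + c * Real.log (c * e / D)
    rw [h1u]
    nlinarith [hlin]
  have hη0 : η 0 = 0 := by simp [η]
  have hηpos : 0 < η tstar := by
    rw [hηt]
    have hlog : Real.log (c * e / D) > -(G / (c * e)) := by
      have h1 : Real.log (D / (c * e)) < D / (c * e) - 1 :=
        Real.log_lt_sub_one_of_pos (by positivity)
          (by
            have : (1:ℝ) < D / (c * e) := by
              rw [lt_div_iff₀ (by positivity)]; rw [hD_def]; nlinarith
            linarith)
      have h2 : Real.log (c * e / D) = - Real.log (D / (c * e)) := by
        rw [Real.log_div (by positivity) (by positivity),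
          Real.log_div (by positivity) (by positivity)]
        ring
      have h3 : D / (c * e) - 1 = G / (c * e) := by
        rw [hD_def]; field_simp; ring
      rw [h2]
      linarith [h1, h3 ▸ h1]
    have : G / e = c * (G / (c * e)) := by field_simp
    nlinarith [hlog, hc]
  refine ⟨hη0, ?_, hηpos, ?_⟩
  · rw [hηt, hs1, hs, Real.log_div (by positivity) (by positivity),
      Real.log_div (by positivity) (by positivity)]
    field_simp
    ring
  · intro t ht htle
    obtain ⟨a, ha⟩ : ∃ a : ℝ, a = t / tstar := ⟨_, rfl⟩
    have ha0 : 0 < a := by rw [ha]; positivity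
    have ha1 : a ≤ 1 := by rw [ha, div_le_one htstar_pos]; exact htle
    have hta : t = a * tstar := by rw [ha]; field_simp
    have hconc := strictConcaveOn_log_Ioi.concaveOn.2
      (Set.mem_Ioi.2 (show (0:ℝ) < 1 by norm_num))
      (Set.mem_Ioi.2 h1u_pos)
      (show (0:ℝ) ≤ 1 - a by linarith)
      (le_of_lt ha0) (by ring)
    have hcomb : (1 - a) • (1:ℝ) + a • (1 - tstar * e) = 1 - t * e := by
      rw [smul_eq_mul, smul_eq_mul, hta]; ring
    rw [hcomb] at hconc
    simp only [smul_eq_mul, Real.log_one, mul_zero, zero_add] at hconc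
    -- hconc : a * log (1 - tstar * e) ≤ log (1 - t * e)
    have h4 : c * (a * Real.log (1 - tstar * e)) ≤ c * Real.log (1 - t * e) :=
      mul_le_mul_of_nonneg_left hconc hc.le
    have key : a * η tstar ≤ η t := by
      show a * (tstar * G - c * (-(tstar * e) - Real.log (1 - tstar * e))) ≤
        t * G - c * (-(t * e) - Real.log (1 - t * e))
      have h7 : a * (tstar * G - c * (-(tstar * e) - Real.log (1 - tstar * e)))
          = t * G + c * (t * e) + c * (a * Real.log (1 - tstar * e)) := by
        rw [hta]; ring
      rw [h7]
      linarith [h4]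
    exact lt_of_lt_of_le (mul_pos ha0 hηpos) key
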